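/- Let G be a simple graph on a vertex type V and let D be a natural number with D ≥ 1 such that every vertex of G has a finite set of neighbours with at most D elements. A finite set S of vertices is called connected if the subgraph of G induced on S is connected, and |S| denotes its cardinality. Then for every vertex v and every natural number n ≥ 1, the collection of connected finite vertex sets S with v ∈ S and |S| = n is finite and has at most D^{2n} elements. -/

import Mathlib

open SimpleGraph


lemma list_count {V : Type*} (G : SimpleGraph V) (D : ℕ)
    (hdeg : ∀ v : V, (G.neighborSet v).Finite ∧ (G.neighborSet v).ncard ≤ D) :
    ∀ (k : ℕ) (x : V),
      {l : List V | l.Chain' G.Adj ∧ l.head? = some x ∧ l.length = k + 1}.Finite ∧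
      {l : List V | l.Chain' G.Adj ∧ l.head? = some x ∧ l.length = k + 1}.ncard ≤ D ^ k := by
  classical
  intro k
  induction k with
  | zero =>
    intro x
    have hset : {l : List V | l.Chain' G.Adj ∧ l.head? = some x ∧ l.length = 0 + 1}
        = {[x]} := by
      ext l
      constructor
      · rintro ⟨-, h1, h2⟩
        match l, h2 with
        | [a], _ => simp_all
      · rintro rfl; simp; exact List.isChain_singleton x
    rw [hset]
    simp
  | succ k ih =>
    intro x
    set N : Finset V := (hdeg x).1.toFinset with hN
    have hsub : {l : List V | l.Chain' G.Adj ∧ l.head? = some x ∧ l.length = (k+1) + 1}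
        ⊆ ⋃ y ∈ N, (List.cons x) ''
          {l : List V | l.Chain' G.Adj ∧ l.head? = some y ∧ l.length = k + 1} := by
      rintro l ⟨hc, hh, hl⟩
      obtain ⟨l', rfl⟩ : ∃ l', l = x :: l' := by
        cases l with
        | nil => simp at hl
        | cons a l' =>
          have ha : a = x := by simpa using hh
          exact ⟨l', by rw [ha]⟩
      have hl' : l'.length = k + 1 := by simpa using hl
      obtain ⟨b, l'', rfl⟩ : ∃ b l'', l' = b :: l'' := by
        cases l' with
        | nil => simp at hl'
        | cons b l'' => exact ⟨b, l'', rfl⟩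
      have hadj : G.Adj x b := (List.isChain_cons_cons.mp hc).1
      have hchain : (b :: l'').Chain' G.Adj := (List.isChain_cons_cons.mp hc).2
      exact Set.mem_biUnion (show b ∈ (N : Set V) by simp [hN, hadj])
        ⟨b :: l'', ⟨hchain, rfl, by simpa using hl'⟩, rfl⟩
    have hfin : (⋃ y ∈ N, (List.cons x) ''
          {l : List V | l.Chain' G.Adj ∧ l.head? = some y ∧ l.length = k + 1}).Finite :=
      Set.Finite.biUnion N.finite_toSet (fun y _ => ((ih y).1.image _))
    refine ⟨hfin.subset hsub, ?_⟩
    have hle1 : {l : List V | l.Chain' G.Adj ∧ l.head? = some x ∧ l.length = (k+1) + 1}.ncard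
        ≤ (⋃ y ∈ N, (List.cons x) ''
          {l : List V | l.Chain' G.Adj ∧ l.head? = some y ∧ l.length = k + 1}).ncard :=
      Set.ncard_le_ncard hsub hfin
    have hle2 : (⋃ y ∈ N, (List.cons x) ''
          {l : List V | l.Chain' G.Adj ∧ l.head? = some y ∧ l.length = k + 1}).ncard
        ≤ ∑ y ∈ N, ((List.cons x) ''
          {l : List V | l.Chain' G.Adj ∧ l.head? = some y ∧ l.length = k + 1}).ncard := by
      classical
      rw [Set.ncard_eq_toFinset_card _ hfin]
      have hss : hfin.toFinset ⊆ N.biUnion (fun y =>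
          (((ih y).1.image (List.cons x)).toFinset)) := by
        intro l hl
        rw [Set.Finite.mem_toFinset] at hl
        rw [Set.mem_iUnion₂] at hl
        obtain ⟨y, hy, hmem⟩ := hl
        rw [Finset.mem_biUnion]
        exact ⟨y, hy, by rw [Set.Finite.mem_toFinset]; exact hmem⟩
      calc hfin.toFinset.card ≤ _ := Finset.card_le_card hss
        _ ≤ ∑ y ∈ N, (((ih y).1.image (List.cons x)).toFinset).card :=
            Finset.card_biUnion_le
        _ = _ := by
            refine Finset.sum_congr rfl fun y _ => ?_
            rw [Set.ncard_eq_toFinset_card _ ((ih y).1.image _)]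
    have hle3 : ∑ y ∈ N, ((List.cons x) ''
          {l : List V | l.Chain' G.Adj ∧ l.head? = some y ∧ l.length = k + 1}).ncard
        ≤ ∑ y ∈ N, D ^ k := by
      refine Finset.sum_le_sum fun y _ => ?_
      exact le_trans (Set.ncard_image_le (ih y).1) (ih y).2
    have hNcard : N.card ≤ D := by
      have := (hdeg x).2
      rwa [Set.ncard_eq_toFinset_card _ (hdeg x).1] at this
    calc _ ≤ _ := hle1
      _ ≤ _ := hle2
      _ ≤ ∑ _y ∈ N, D ^ k := hle3
      _ = N.card * D ^ k := by rw [Finset.sum_const, smul_eq_mul]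
      _ ≤ D * D ^ k := Nat.mul_le_mul_right _ hNcard
      _ = D ^ (k + 1) := by ring


lemma exists_spanning_closed_walk {V : Type*} [DecidableEq V] (G : SimpleGraph V) :
    ∀ (n : ℕ) (S : Finset V) (v : V), v ∈ S → S.card = n →
      (G.induce (S : Set V)).Connected →
      ∃ w : G.Walk v v, w.length = 2 * (n - 1) ∧ w.support.toFinset = S := by
  intro n
  induction n using Nat.strong_induction_on with
  | _ n IH =>
    intro S v hv hcard hconn
    rcases Nat.lt_or_ge n 2 with hn2 | hn2
    · -- n = 1 (n = 0 impossible)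
      have hn1 : n = 1 := by
        have : 0 < n := hcard ▸ Finset.card_pos.mpr ⟨v, hv⟩
        omega
      subst hn1
      obtain ⟨a, ha⟩ := Finset.card_eq_one.mp hcard
      have hva : v = a := by rw [ha] at hv; simpa using hv
      subst hva
      exact ⟨Walk.nil, by simp, by simp [ha]⟩
    · -- n ≥ 2
      set s : Set V := (S : Set V) with hs
      have hvs : v ∈ s := by simpa [hs] using hv
      set H := G.induce s with hH
      have hvS : (⟨v, hvs⟩ : s) ∈ (Finset.univ : Finset s) := Finset.mem_univ _
      obtain ⟨uu, -, hmax⟩ := Finset.exists_max_image (Finset.univ : Finset s)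
        (fun x => H.dist ⟨v, hvs⟩ x) ⟨⟨v, hvs⟩, hvS⟩
      -- uu ≠ v
      obtain ⟨x, hxS, hxv⟩ := Finset.exists_mem_ne (by omega : 1 < S.card) v
      have hxs : x ∈ s := by simpa [hs] using hxS
      have hxv' : (⟨x, hxs⟩ : s) ≠ ⟨v, hvs⟩ := by simp [Subtype.ext_iff, hxv]
      have hdx : 0 < H.dist ⟨v, hvs⟩ ⟨x, hxs⟩ :=
        hconn.pos_dist_of_ne (Ne.symm hxv')
      have hdu : 0 < H.dist ⟨v, hvs⟩ uu :=
        lt_of_lt_of_le hdx (hmax _ (Finset.mem_univ _))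
      have huv : uu ≠ ⟨v, hvs⟩ := by
        rintro rfl
        simp [SimpleGraph.dist_self] at hdu
      -- walks from v avoiding uu
      have avoid : ∀ x : s, x ≠ uu → ∃ p : H.Walk ⟨v, hvs⟩ x, uu ∉ p.support := by
        intro x hx
        obtain ⟨p, hp⟩ := hconn.exists_walk_length_eq_dist ⟨v, hvs⟩ x
        refine ⟨p, fun hu => ?_⟩
        have h1 : H.dist ⟨v, hvs⟩ uu ≤ (p.takeUntil uu hu).length := SimpleGraph.dist_le _
        have h2 : 1 ≤ (p.dropUntil uu hu).length := by
          rcases Nat.eq_zero_or_pos (p.dropUntil uu hu).length with h0 | h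
          · exact absurd (Walk.eq_of_length_eq_zero h0) (by simpa using hx.symm)
          · exact h
        have h3 : (p.takeUntil uu hu).length + (p.dropUntil uu hu).length = p.length := by
          have := congrArg Walk.length (p.take_spec hu)
          rwa [Walk.length_append] at this
        have h4 : H.dist ⟨v, hvs⟩ x ≤ H.dist ⟨v, hvs⟩ uu := hmax _ (Finset.mem_univ _)
        omega
      -- uu has a neighbour ww
      obtain ⟨q⟩ := hconn uu ⟨v, hvs⟩
      obtain ⟨ww, hadjH⟩ : ∃ ww : s, H.Adj uu ww := by
        cases q with
        | nil => exact absurd rfl huv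
        | cons h q' => exact ⟨_, h⟩
      have hadj : G.Adj (uu : V) (ww : V) := hadjH
      set u : V := (uu : V) with hu_def
      have huS : u ∈ S := by
        have h2 := uu.2
        simp only [hs, Finset.mem_coe] at h2
        exact h2
      set S' : Finset V := S.erase u with hS'
      have hvne : v ≠ u := fun h => huv (Subtype.ext h.symm)
      have hvS' : v ∈ S' := Finset.mem_erase.mpr ⟨hvne, hv⟩
      have hwS' : (ww : V) ∈ S' := Finset.mem_erase.mpr ⟨hadj.ne', by simpa [hs] using ww.2⟩
      have hcard' : S'.card = n - 1 := by rw [hS', Finset.card_erase_of_mem huS, hcard]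
      -- connectivity of the smaller induced graph
      have hconn' : (G.induce (S' : Set V)).Connected := by
        apply SimpleGraph.induce_connected_of_patches v (by exact_mod_cast hvS')
        intro y hy
        have hyS : y ∈ s := by
          have := Finset.mem_of_mem_erase (by exact_mod_cast hy)
          simpa [hs] using this
        have hyu : (⟨y, hyS⟩ : s) ≠ uu := by
          intro h
          have : y = u := congrArg Subtype.val h
          have := Finset.ne_of_mem_erase (by exact_mod_cast hy)
          exact this ‹y = u›
        obtain ⟨p, hp⟩ := avoid ⟨y, hyS⟩ hyu
        set q := p.map (SimpleGraph.Embedding.induce s).toHom with hq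
        have hsupp : ∀ z ∈ q.support, z ∈ (S' : Set V) := by
          intro z hz
          rw [hq, Walk.support_map, List.mem_map] at hz
          obtain ⟨zz, hzz, rfl⟩ := hz
          have hzs : (zz : V) ∈ s := zz.2
          have hzu : (zz : V) ≠ u := by
            intro h
            exact hp (by rwa [show zz = uu from Subtype.ext h] at hzz)
          simp only [hS', Finset.coe_erase, Set.mem_diff, Set.mem_singleton_iff]
          exact ⟨hzs, hzu⟩
        refine ⟨{z | z ∈ q.support}, hsupp, q.start_mem_support, q.end_mem_support, ?_⟩
        exact (q.connected_induce_support) ⟨v, q.start_mem_support⟩ ⟨y, q.end_mem_support⟩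
      -- apply induction hypothesis
      obtain ⟨w', hlen', hsupp'⟩ := IH (n - 1) (by omega) S' v hvS' hcard' hconn'
      have hwmem : (ww : V) ∈ w'.support := by
        rw [← List.mem_toFinset, hsupp']; exact hwS'
      set t := w'.takeUntil (ww : V) hwmem with ht
      set d := w'.dropUntil (ww : V) hwmem with hd
      have hadj' : G.Adj (ww : V) u := hadj.symm
      set mid : G.Walk (ww : V) (ww : V) := Walk.cons hadj' (Walk.cons hadj'.symm Walk.nil)
        with hmid
      refine ⟨t.append (mid.append d), ?_, ?_⟩
      · have h3 : t.length + d.length = w'.length := by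
          have h4 := congrArg Walk.length (w'.take_spec hwmem)
          rwa [Walk.length_append] at h4
        simp only [Walk.length_append, hmid, Walk.length_cons, Walk.length_nil]
        omega
      · ext y
        simp only [List.mem_toFinset, Walk.mem_support_append_iff]
        have hmid_supp : y ∈ mid.support ↔ (y = (ww : V) ∨ y = u) := by
          simp [hmid, Walk.support_cons]
          tauto
        have hw'supp : (y ∈ t.support ∨ y ∈ d.support) ↔ y ∈ w'.support := by
          rw [← Walk.mem_support_append_iff, w'.take_spec hwmem]
        have hS'mem : y ∈ w'.support ↔ y ∈ S' := by
          rw [← List.mem_toFinset, hsupp']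
        constructor
        · rintro (h | h | h)
          · exact Finset.mem_of_mem_erase (hS'mem.mp (hw'supp.mp (Or.inl h)))
          · rcases hmid_supp.mp h with rfl | rfl
            · exact Finset.mem_of_mem_erase hwS'
            · exact huS
          · exact Finset.mem_of_mem_erase (hS'mem.mp (hw'supp.mp (Or.inr h)))
        · intro hyS
          by_cases hyu : y = u
          · exact Or.inr (Or.inl (hmid_supp.mpr (Or.inr hyu)))
          · have : y ∈ w'.support := hS'mem.mpr (Finset.mem_erase.mpr ⟨hyu, hyS⟩)
            rcases hw'supp.mpr this with h | h
            · exact Or.inl h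
            · exact Or.inr (Or.inr h)

/-- Counting connected vertex sets: in a graph in which every vertex has at
most `D ≥ 1` neighbours, the number of connected finite vertex sets `S` with `v ∈ S` and
`|S| = n` (for `n ≥ 1`) is finite and at most `D^(2n)`. -/
theorem count_connected_sets
    {V : Type*} (G : SimpleGraph V) (D : ℕ) (hD : 1 ≤ D)
    (hdeg : ∀ v : V, (G.neighborSet v).Finite ∧ (G.neighborSet v).ncard ≤ D)
    (v : V) (n : ℕ) (hn : 1 ≤ n) :
    {S : Finset V | v ∈ S ∧ S.card = n ∧ (G.induce (S : Set V)).Connected}.Finite ∧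
    {S : Finset V | v ∈ S ∧ S.card = n ∧ (G.induce (S : Set V)).Connected}.ncard
      ≤ D ^ (2 * n) := by
  classical
  set A := {S : Finset V | v ∈ S ∧ S.card = n ∧ (G.induce (S : Set V)).Connected} with hA
  set L := {l : List V | l.Chain' G.Adj ∧ l.head? = some v ∧ l.length = 2 * (n - 1) + 1}
    with hL
  obtain ⟨hLfin, hLcard⟩ := list_count G D hdeg (2 * (n - 1)) v
  set f : Finset V → List V := fun S =>
    if h : ∃ w : G.Walk v v, w.length = 2 * (n - 1) ∧ w.support.toFinset = S then
      h.choose.support else [] with hf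
  have hfspec : ∀ S ∈ A, f S ∈ L ∧ (f S).toFinset = S := by
    rintro S ⟨h1, h2, h3⟩
    have hex : ∃ w : G.Walk v v, w.length = 2 * (n - 1) ∧ w.support.toFinset = S := by
      obtain ⟨w, hw1, hw2⟩ := exists_spanning_closed_walk G n S v h1 h2 h3
      exact ⟨w, hw1, hw2⟩
    obtain ⟨hw1, hw2⟩ := hex.choose_spec
    have hfS : f S = hex.choose.support := by rw [hf]; exact dif_pos hex
    refine ⟨?_, by rw [hfS]; exact hw2⟩
    rw [hL, hfS]
    refine ⟨Walk.isChain_adj_support _, ?_, ?_⟩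
    · rw [Walk.support_eq_cons]; rfl
    · rw [Walk.length_support, hw1]
  have hmaps : ∀ S ∈ A, f S ∈ L := fun S hS => (hfspec S hS).1
  have hinj : Set.InjOn f A := by
    intro S1 h1 S2 h2 heq
    rw [← (hfspec S1 h1).2, ← (hfspec S2 h2).2, heq]
  constructor
  · exact Set.Finite.of_finite_image (hLfin.subset (Set.image_subset_iff.mpr hmaps)) hinj
  · calc A.ncard ≤ L.ncard := Set.ncard_le_ncard_of_injOn f hmaps hinj hLfin
      _ ≤ D ^ (2 * (n - 1)) := hLcard
      _ ≤ D ^ (2 * n) := Nat.pow_le_pow_right hD (by omega)
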